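/- There exists a constant c > 0 such that for every integer n ≥ 1, ∫_Ω |Θ_n(t)| dt ≤ c·n. -/

import Mathlib

noncomputable section

open MeasureTheory Filter
open scoped ENNReal

/-- The (half-open) regular hexagon `Ω` in the coordinates `(t₁,t₂)` (with `t₃ = -(t₁+t₂)`). -/
def Hex : Set (ℝ × ℝ) :=
  {t | -1 ≤ t.1 ∧ t.1 < 1 ∧ -1 ≤ t.2 ∧ t.2 < 1 ∧ -1 ≤ t.1 + t.2 ∧ t.1 + t.2 < 1}

/-- Third homogeneous coordinate: `t₃ = -(t₁+t₂)`. -/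
def t3 (t : ℝ × ℝ) : ℝ := -(t.1 + t.2)

/-- The function `Θ_n`. -/
def Theta (n : ℕ) (t : ℝ × ℝ) : ℝ :=
  (Real.sin ((n+1) * Real.pi * (t.1 - t.2) / 3) *
   Real.sin ((n+1) * Real.pi * (t.2 - t3 t) / 3) *
   Real.sin ((n+1) * Real.pi * (t3 t - t.1) / 3)) /
  (Real.sin (Real.pi * (t.1 - t.2) / 3) *
   Real.sin (Real.pi * (t.2 - t3 t) / 3) *
   Real.sin (Real.pi * (t3 t - t.1) / 3))

namespace Stmt7Aux

open Real Set

/-! ### Elementary sine bounds -/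

lemma abs_sin_nat_mul_le (m : ℕ) (θ : ℝ) : |Real.sin (m * θ)| ≤ m * |Real.sin θ| := by
  induction m with
  | zero => simp
  | succ k ih =>
    have h : ((k + 1 : ℕ) : ℝ) * θ = k * θ + θ := by push_cast; ring
    rw [h, Real.sin_add]
    have h1 : |Real.sin (k * θ) * Real.cos θ + Real.cos (k * θ) * Real.sin θ| ≤
        |Real.sin (k * θ) * Real.cos θ| + |Real.cos (k * θ) * Real.sin θ| := abs_add_le _ _
    have h2 : |Real.sin (k * θ) * Real.cos θ| ≤ |Real.sin (k * θ)| := by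
      rw [abs_mul]
      exact mul_le_of_le_one_right (abs_nonneg _) (Real.abs_cos_le_one θ)
    have h3 : |Real.cos (k * θ) * Real.sin θ| ≤ |Real.sin θ| := by
      rw [abs_mul]
      exact mul_le_of_le_one_left (abs_nonneg _) (Real.abs_cos_le_one _)
    push_cast
    linarith

lemma sin_lb {x : ℝ} (h0 : 0 ≤ x) (h2 : x ≤ 2) : x / 3 ≤ Real.sin (π * x / 3) := by
  have hπ := Real.pi_pos
  have hconc := strictConcaveOn_sin_Icc.concaveOn
  have hmem0 : (0 : ℝ) ∈ Icc (0 : ℝ) π := ⟨le_rfl, hπ.le⟩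
  have hmem1 : 2 * π / 3 ∈ Icc (0 : ℝ) π := ⟨by positivity, by linarith⟩
  have key := hconc.2 hmem0 hmem1 (show (0:ℝ) ≤ 1 - x / 2 by linarith)
    (show (0:ℝ) ≤ x / 2 by linarith) (show (1 - x / 2) + x / 2 = 1 by ring)
  have hsin23 : Real.sin (2 * π / 3) = Real.sqrt 3 / 2 := by
    rw [show 2 * π / 3 = π - π / 3 by ring, Real.sin_pi_sub, Real.sin_pi_div_three]
  rw [show (1 - x / 2) • (0:ℝ) + (x / 2) • (2 * π / 3) = π * x / 3 by
    rw [smul_eq_mul, smul_eq_mul]; ring] at key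
  rw [smul_eq_mul, smul_eq_mul, Real.sin_zero, mul_zero, zero_add, hsin23] at key
  have hsqrt3 : (4 : ℝ) / 3 ≤ Real.sqrt 3 := by
    nlinarith [Real.sq_sqrt (show (0:ℝ) ≤ 3 by norm_num), Real.sqrt_nonneg 3]
  nlinarith [key, mul_nonneg h0 (sub_nonneg.2 hsqrt3)]

lemma abs_sin_lb {x : ℝ} (hx : |x| ≤ 2) : |x| / 3 ≤ |Real.sin (π * x / 3)| := by
  rcases le_or_gt 0 x with h | h
  · rw [abs_of_nonneg h] at hx ⊢
    have := sin_lb h hx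
    rw [abs_of_nonneg (by linarith [div_nonneg h (by norm_num : (0:ℝ) ≤ 3)])]
    exact this
  · rw [abs_of_neg h] at hx ⊢
    have hx0 : (0:ℝ) ≤ -x := by linarith
    have hpos := sin_lb hx0 hx
    have hs0 : 0 ≤ Real.sin (π * -x / 3) := le_trans (by linarith) hpos
    rw [show π * x / 3 = -(π * -x / 3) by ring, Real.sin_neg, abs_neg, abs_of_nonneg hs0]
    exact hpos

/-! ### The majorant `F` and its `3/2`-power `Phi` -/

/-- Dirichlet-type majorant. -/
def F (N x : ℝ) : ℝ := min N (3 / |x|)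

/-- `F^{3/2}`. -/
def Phi (N x : ℝ) : ℝ := F N x * Real.sqrt (F N x)

lemma F_nonneg {N : ℝ} (hN : 0 ≤ N) (x : ℝ) : 0 ≤ F N x :=
  le_min hN (by positivity)

lemma Phi_nonneg {N : ℝ} (hN : 0 ≤ N) (x : ℝ) : 0 ≤ Phi N x :=
  mul_nonneg (F_nonneg hN x) (Real.sqrt_nonneg _)

lemma F_neg (N x : ℝ) : F N (-x) = F N x := by simp [F]

lemma Phi_neg (N x : ℝ) : Phi N (-x) = Phi N x := by simp [Phi, F_neg]

lemma measurable_F (N : ℝ) : Measurable (F N) :=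
  measurable_const.min (measurable_const.div measurable_abs)

lemma measurable_Phi (N : ℝ) : Measurable (Phi N) :=
  (measurable_F N).mul (Real.continuous_sqrt.measurable.comp (measurable_F N))

/-- Single-factor pointwise bound. -/
lemma factor_le (n : ℕ) {x : ℝ} (hx : |x| ≤ 2) :
    |Real.sin (((n : ℝ) + 1) * Real.pi * x / 3)| ≤
      F ((n : ℝ) + 1) x * |Real.sin (Real.pi * x / 3)| := by
  by_cases hs : Real.sin (π * x / 3) = 0
  · have hx0 : x = 0 := by
      by_contra h
      have h1 := abs_sin_lb hx
      rw [hs, abs_zero] at h1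
      have := abs_pos.2 h
      linarith
    subst hx0
    simp
  · have hx0 : x ≠ 0 := by
      rintro rfl
      simp at hs
    have hxpos : 0 < |x| := abs_pos.2 hx0
    have hlb := abs_sin_lb hx
    have harg : ((n : ℝ) + 1) * Real.pi * x / 3 = ((n + 1 : ℕ) : ℝ) * (π * x / 3) := by
      push_cast; ring
    have hub : |Real.sin (((n : ℝ) + 1) * Real.pi * x / 3)| ≤
        ((n : ℝ) + 1) * |Real.sin (π * x / 3)| := by
      rw [harg]
      exact_mod_cast abs_sin_nat_mul_le (n + 1) (π * x / 3)
    have hub2 : |Real.sin (((n : ℝ) + 1) * Real.pi * x / 3)| ≤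
        (3 / |x|) * |Real.sin (π * x / 3)| := by
      have h1 : |Real.sin (((n : ℝ) + 1) * Real.pi * x / 3)| ≤ 1 := Real.abs_sin_le_one _
      have h2 : (3 / |x|) * (|x| / 3) = 1 := by field_simp
      have h3 : (3 / |x|) * (|x| / 3) ≤ (3 / |x|) * |Real.sin (π * x / 3)| :=
        mul_le_mul_of_nonneg_left hlb (by positivity)
      linarith
    have hmin : F ((n : ℝ) + 1) x * |Real.sin (π * x / 3)| =
        min (((n : ℝ) + 1) * |Real.sin (π * x / 3)|) ((3 / |x|) * |Real.sin (π * x / 3)|) := by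
      rw [F, min_mul_of_nonneg _ _ (abs_nonneg _)]
    rw [hmin]
    exact le_min hub hub2

/-- Pointwise bound of `|Θ_n|` over the hexagon by the product of the three majorants. -/
lemma theta_le (n : ℕ) {t : ℝ × ℝ} (ht : t ∈ Hex) :
    |Theta n t| ≤ F ((n : ℝ) + 1) (t.1 - t.2) * F ((n : ℝ) + 1) (t.1 + 2 * t.2) *
      F ((n : ℝ) + 1) (2 * t.1 + t.2) := by
  obtain ⟨h1, h2, h3, h4, h5, h6⟩ := ht
  set N : ℝ := (n : ℝ) + 1 with hNdef
  have hN0 : (0 : ℝ) ≤ N := by positivity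
  have ha : |t.1 - t.2| ≤ 2 := abs_le.2 ⟨by linarith, by linarith⟩
  have hb : |t.1 + 2 * t.2| ≤ 2 := abs_le.2 ⟨by linarith, by linarith⟩
  have hc : |(-(2 * t.1 + t.2))| ≤ 2 := by
    rw [abs_neg]; exact abs_le.2 ⟨by linarith, by linarith⟩
  have e2 : t.2 - t3 t = t.1 + 2 * t.2 := by simp [t3]; ring
  have e3 : t3 t - t.1 = -(2 * t.1 + t.2) := by simp [t3]; ring
  have f1 := factor_le n ha
  have f2 := factor_le n hb
  have f3 := factor_le n hc
  rw [Theta, e2, e3, abs_div, abs_mul, abs_mul, abs_mul, abs_mul]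
  rcases eq_or_ne (|Real.sin (Real.pi * (t.1 - t.2) / 3)| *
      |Real.sin (Real.pi * (t.1 + 2 * t.2) / 3)| *
      |Real.sin (Real.pi * (-(2 * t.1 + t.2)) / 3)|) 0 with hd | hd
  · rw [hd, div_zero]
    exact mul_nonneg (mul_nonneg (F_nonneg hN0 _) (F_nonneg hN0 _)) (F_nonneg hN0 _)
  · have hdpos : 0 < |Real.sin (Real.pi * (t.1 - t.2) / 3)| *
        |Real.sin (Real.pi * (t.1 + 2 * t.2) / 3)| *
        |Real.sin (Real.pi * (-(2 * t.1 + t.2)) / 3)| :=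
      lt_of_le_of_ne (by positivity) (Ne.symm hd)
    rw [div_le_iff₀ hdpos]
    have hFc : F N (-(2 * t.1 + t.2)) = F N (2 * t.1 + t.2) := F_neg N _
    calc |Real.sin ((↑n + 1) * Real.pi * (t.1 - t.2) / 3)| *
          |Real.sin ((↑n + 1) * Real.pi * (t.1 + 2 * t.2) / 3)| *
          |Real.sin ((↑n + 1) * Real.pi * (-(2 * t.1 + t.2)) / 3)|
        ≤ (F N (t.1 - t.2) * |Real.sin (Real.pi * (t.1 - t.2) / 3)|) *
          (F N (t.1 + 2 * t.2) * |Real.sin (Real.pi * (t.1 + 2 * t.2) / 3)|) *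
          (F N (-(2 * t.1 + t.2)) * |Real.sin (Real.pi * (-(2 * t.1 + t.2)) / 3)|) := by
          apply mul_le_mul (mul_le_mul f1 f2 (abs_nonneg _)
            (mul_nonneg (F_nonneg hN0 _) (abs_nonneg _))) f3 (abs_nonneg _)
          exact mul_nonneg (mul_nonneg (F_nonneg hN0 _) (abs_nonneg _))
            (mul_nonneg (F_nonneg hN0 _) (abs_nonneg _))
      _ = F N (t.1 - t.2) * F N (t.1 + 2 * t.2) * F N (-(2 * t.1 + t.2)) *
          (|Real.sin (Real.pi * (t.1 - t.2) / 3)| *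
           |Real.sin (Real.pi * (t.1 + 2 * t.2) / 3)| *
           |Real.sin (Real.pi * (-(2 * t.1 + t.2)) / 3)|) := by ring
      _ = F N (t.1 - t.2) * F N (t.1 + 2 * t.2) * F N (2 * t.1 + t.2) *
          (|Real.sin (Real.pi * (t.1 - t.2) / 3)| *
           |Real.sin (Real.pi * (t.1 + 2 * t.2) / 3)| *
           |Real.sin (Real.pi * (-(2 * t.1 + t.2)) / 3)|) := by rw [hFc]

/-! ### The elementary three-term inequality `pqr ≤ (pq)^{3/2} + (qr)^{3/2} + (pr)^{3/2}` -/

lemma pqr_aux {p q r : ℝ} (hp : 0 ≤ p) (hq : 0 ≤ q) (hr : 0 ≤ r)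
    (hrp : r ≤ p) (hrq : r ≤ q) :
    p * q * r ≤ (p * q) * Real.sqrt (p * q) := by
  have h1 : r ≤ Real.sqrt (p * q) := by
    have h2 : r * r ≤ p * q := mul_le_mul hrp hrq hr hp
    calc r = Real.sqrt (r * r) := (Real.sqrt_mul_self hr).symm
      _ ≤ Real.sqrt (p * q) := Real.sqrt_le_sqrt h2
  exact mul_le_mul_of_nonneg_left h1 (mul_nonneg hp hq)

lemma sqrt_mul_split {a b : ℝ} (ha : 0 ≤ a) :
    (a * b) * Real.sqrt (a * b) = (a * Real.sqrt a) * (b * Real.sqrt b) := by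
  rw [Real.sqrt_mul ha]; ring

lemma pqr {p q r : ℝ} (hp : 0 ≤ p) (hq : 0 ≤ q) (hr : 0 ≤ r) :
    p * q * r ≤ (p * Real.sqrt p) * (q * Real.sqrt q) +
      ((q * Real.sqrt q) * (r * Real.sqrt r) + (p * Real.sqrt p) * (r * Real.sqrt r)) := by
  have sp : 0 ≤ p * Real.sqrt p := mul_nonneg hp (Real.sqrt_nonneg _)
  have sq : 0 ≤ q * Real.sqrt q := mul_nonneg hq (Real.sqrt_nonneg _)
  have sr : 0 ≤ r * Real.sqrt r := mul_nonneg hr (Real.sqrt_nonneg _)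
  rcases le_total r p with h1 | h1
  · rcases le_total r q with h2 | h2
    · -- r is minimal
      have hkey := pqr_aux hp hq hr h1 h2
      rw [sqrt_mul_split hp] at hkey
      nlinarith [mul_nonneg sq sr, mul_nonneg sp sr]
    · -- q ≤ r ≤ p : q is minimal
      have hkey := pqr_aux hp hr hq (h2.trans h1) h2
      rw [sqrt_mul_split hp] at hkey
      nlinarith [mul_nonneg sp sq, mul_nonneg sq sr]
  · rcases le_total p q with h2 | h2
    · -- p ≤ r, p ≤ q : p is minimal
      have hkey := pqr_aux hq hr hp h2 h1
      rw [sqrt_mul_split hq] at hkey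
      nlinarith [mul_nonneg sp sq, mul_nonneg sp sr]
    · -- q ≤ p ≤ r : q is minimal
      have hkey := pqr_aux hp hr hq h2 (h1.trans' h2)
      rw [sqrt_mul_split hp] at hkey
      nlinarith [mul_nonneg sp sq, mul_nonneg sq sr]

/-! ### 1-D Lebesgue integral substitutions -/

lemma lint_scale {g : ℝ → ℝ≥0∞} (hg : Measurable g) {c : ℝ} (hc : c ≠ 0) :
    ∫⁻ x : ℝ, g (c * x) = ENNReal.ofReal |c⁻¹| * ∫⁻ x : ℝ, g x := by
  calc ∫⁻ x : ℝ, g (c * x)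
      = ∫⁻ y, g y ∂(Measure.map (c * ·) volume) :=
        (lintegral_map hg (measurable_const_mul c)).symm
    _ = ENNReal.ofReal |c⁻¹| * ∫⁻ x : ℝ, g x := by
        rw [Real.map_volume_mul_left hc, lintegral_smul_measure, smul_eq_mul]

lemma lint_affine {g : ℝ → ℝ≥0∞} (hg : Measurable g) {c : ℝ} (hc : c ≠ 0) (d : ℝ) :
    ∫⁻ x : ℝ, g (c * x + d) = ENNReal.ofReal |c⁻¹| * ∫⁻ x : ℝ, g x := by
  have h1 : ∀ x : ℝ, c * x + d = c * (x + d / c) := by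
    intro x
    rw [mul_add]
    congr 1
    rw [mul_comm, div_mul_cancel₀ d hc]
  have h2 : ∀ x : ℝ, g (c * x + d) = (fun y : ℝ => g (c * y)) (x + d / c) := by
    intro x; simp only; rw [← h1 x]
  simp_rw [h2]
  rw [lintegral_add_right_eq_self (fun y : ℝ => g (c * y)) (d / c)]
  exact lint_scale hg hc

/-! ### The 2-D decoupling bound -/

lemma pair_bound {φ : ℝ → ℝ≥0∞} (hφ : Measurable φ) (q r s : ℝ) (he : s - r * q ≠ 0) :
    ∫⁻ t : ℝ × ℝ, φ (t.1 + q * t.2) * φ (r * t.1 + s * t.2)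
      = (∫⁻ x : ℝ, φ x) * (ENNReal.ofReal |(s - r * q)⁻¹| * ∫⁻ x : ℝ, φ x) := by
  have hm1 : Measurable fun t : ℝ × ℝ => φ (t.1 + q * t.2) * φ (r * t.1 + s * t.2) :=
    ((hφ.comp (measurable_fst.add (measurable_snd.const_mul q))).mul
      (hφ.comp ((measurable_fst.const_mul r).add (measurable_snd.const_mul s))))
  rw [show (volume : Measure (ℝ × ℝ)) = (volume : Measure ℝ).prod volume from
    Measure.volume_eq_prod ℝ ℝ]
  rw [lintegral_prod_symm _ hm1.aemeasurable]
  have step1 : ∀ y : ℝ, (∫⁻ x : ℝ, φ (x + q * y) * φ (r * x + s * y)) =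
      ∫⁻ x : ℝ, φ x * φ (r * x + (s - r * q) * y) := by
    intro y
    have hxy : ∀ x : ℝ, φ (x + q * y) * φ (r * x + s * y) =
        (fun z : ℝ => φ z * φ (r * z + (s - r * q) * y)) (x + q * y) := by
      intro x
      simp only
      congr 2
      ring
    simp_rw [hxy]
    exact lintegral_add_right_eq_self (fun z : ℝ => φ z * φ (r * z + (s - r * q) * y)) (q * y)
  simp_rw [step1]
  rw [lintegral_lintegral_swap]
  · have step2 : ∀ x : ℝ, (∫⁻ y : ℝ, φ x * φ (r * x + (s - r * q) * y)) =
        φ x * (ENNReal.ofReal |(s - r * q)⁻¹| * ∫⁻ z : ℝ, φ z) := by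
      intro x
      have hmeas : Measurable fun y : ℝ => φ (r * x + (s - r * q) * y) :=
        hφ.comp ((measurable_const_mul (s - r * q)).const_add (r * x))
      rw [lintegral_const_mul (φ x) hmeas]
      congr 1
      have hyy : ∀ y : ℝ, φ (r * x + (s - r * q) * y) = φ ((s - r * q) * y + r * x) := by
        intro y; congr 1; ring
      simp_rw [hyy]
      exact lint_affine hφ he (r * x)
    simp_rw [step2]
    rw [lintegral_mul_const _ hφ]
  · exact ((hφ.comp measurable_snd).mul (hφ.comp
      ((measurable_snd.const_mul r).add ((measurable_fst.const_mul (s - r * q)))))).aemeasurable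

/-! ### The integral of `Phi` -/

lemma lintegral_phi_le {N : ℝ} (hN : 1 ≤ N) :
    ∫⁻ x : ℝ, ENNReal.ofReal (Phi N x) ≤ ENNReal.ofReal (18 * Real.sqrt N) := by
  have hN0 : (0 : ℝ) < N := by linarith
  set δ : ℝ := 3 / N with hδdef
  have hδ : 0 < δ := by positivity
  have hφm : Measurable fun x : ℝ => ENNReal.ofReal (Phi N x) :=
    (measurable_Phi N).ennreal_ofReal
  have hIoi : ∫⁻ x in Ioi δ, ENNReal.ofReal (Phi N x) ≤ ENNReal.ofReal (6 * Real.sqrt N) := by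
    have hb : ∀ x ∈ Ioi δ, ENNReal.ofReal (Phi N x) ≤
        ENNReal.ofReal (3 * Real.sqrt 3 * x ^ (-(3:ℝ)/2)) := by
      intro x hx
      have hx0 : (0 : ℝ) < x := lt_trans hδ hx
      apply ENNReal.ofReal_le_ofReal
      have hF : F N x ≤ 3 / x := by
        refine (min_le_right _ _).trans (le_of_eq ?_)
        rw [abs_of_pos hx0]
      have hF0 : 0 ≤ F N x := F_nonneg hN0.le x
      have hle : Phi N x ≤ (3 / x) * Real.sqrt (3 / x) :=
        mul_le_mul hF (Real.sqrt_le_sqrt hF) (Real.sqrt_nonneg _) (by positivity)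
      refine hle.trans (le_of_eq ?_)
      have hx32 : x ^ ((3:ℝ)/2) = x * Real.sqrt x := by
        rw [show ((3:ℝ)/2) = 1 + 1/2 by norm_num, Real.rpow_add hx0, Real.rpow_one,
          ← Real.sqrt_eq_rpow]
      rw [show (-(3:ℝ)/2) = -((3:ℝ)/2) by norm_num, Real.rpow_neg hx0.le, hx32,
        Real.sqrt_div (by norm_num : (0:ℝ) ≤ 3) x]
      have hsx : 0 < Real.sqrt x := Real.sqrt_pos.2 hx0
      field_simp
    calc ∫⁻ x in Ioi δ, ENNReal.ofReal (Phi N x)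
        ≤ ∫⁻ x in Ioi δ, ENNReal.ofReal (3 * Real.sqrt 3 * x ^ (-(3:ℝ)/2)) :=
          setLIntegral_mono' measurableSet_Ioi hb
      _ = ENNReal.ofReal (∫ x in Ioi δ, 3 * Real.sqrt 3 * x ^ (-(3:ℝ)/2)) := by
          have hint : Integrable (fun x : ℝ => 3 * Real.sqrt 3 * x ^ (-(3:ℝ)/2))
              (volume.restrict (Ioi δ)) :=
            (integrableOn_Ioi_rpow_of_lt (by norm_num) hδ).const_mul _
          have hnn : 0 ≤ᵐ[volume.restrict (Ioi δ)]
              fun x : ℝ => 3 * Real.sqrt 3 * x ^ (-(3:ℝ)/2) := by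
            refine (ae_restrict_iff' measurableSet_Ioi).2 (ae_of_all _ fun x hx => ?_)
            have hx0 : (0 : ℝ) < x := lt_trans hδ hx
            positivity
          rw [← ofReal_integral_eq_lintegral_ofReal hint hnn]
      _ ≤ ENNReal.ofReal (6 * Real.sqrt N) := by
          apply ENNReal.ofReal_le_ofReal
          rw [MeasureTheory.integral_const_mul, integral_Ioi_rpow_of_lt (by norm_num) hδ]
          rw [show (-(3:ℝ)/2 + 1) = -(1/2 : ℝ) by norm_num]
          have hδpow : δ ^ (-(1/2) : ℝ) = (Real.sqrt δ)⁻¹ := by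
            rw [Real.rpow_neg hδ.le, ← Real.sqrt_eq_rpow]
          rw [hδpow, hδdef, Real.sqrt_div (by norm_num : (0:ℝ) ≤ 3) N]
          have h3 : (0:ℝ) < Real.sqrt 3 := by positivity
          have hNs : (0:ℝ) < Real.sqrt N := Real.sqrt_pos.2 hN0
          have key : 3 * Real.sqrt 3 * (-((Real.sqrt 3 / Real.sqrt N)⁻¹) / (-(1/2))) =
              6 * Real.sqrt N := by
            rw [inv_div]
            field_simp
            ring
          rw [key]
  have hIio : ∫⁻ x in Iio (-δ), ENNReal.ofReal (Phi N x) ≤ ENNReal.ofReal (6 * Real.sqrt N) := by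
    have hres : (volume : Measure ℝ).restrict (Iio (-δ)) =
        Measure.map Neg.neg ((volume : Measure ℝ).restrict (Ioi δ)) := by
      have hset : (Neg.neg : ℝ → ℝ) ⁻¹' (Iio (-δ)) = Ioi δ := by
        ext x
        simp only [Set.mem_preimage, Set.mem_Iio, Set.mem_Ioi]
        constructor
        · intro h; linarith
        · intro h; linarith
      conv_lhs => rw [← Measure.map_neg_eq_self (volume : Measure ℝ)]
      rw [Measure.restrict_map measurable_neg measurableSet_Iio, hset]
    rw [hres, lintegral_map hφm measurable_neg]
    simp_rw [Phi_neg]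
    exact hIoi
  have hIcc : ∫⁻ x in Icc (-δ) δ, ENNReal.ofReal (Phi N x) ≤
      ENNReal.ofReal (6 * Real.sqrt N) := by
    have hb : ∀ x ∈ Icc (-δ) δ, ENNReal.ofReal (Phi N x) ≤
        ENNReal.ofReal (N * Real.sqrt N) := by
      intro x _
      apply ENNReal.ofReal_le_ofReal
      have h1 : F N x ≤ N := min_le_left _ _
      exact mul_le_mul h1 (Real.sqrt_le_sqrt h1) (Real.sqrt_nonneg _) hN0.le
    calc ∫⁻ x in Icc (-δ) δ, ENNReal.ofReal (Phi N x)
        ≤ ∫⁻ _x in Icc (-δ) δ, ENNReal.ofReal (N * Real.sqrt N) :=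
          setLIntegral_mono' measurableSet_Icc hb
      _ = ENNReal.ofReal (N * Real.sqrt N) * volume (Icc (-δ) δ) := setLIntegral_const _ _
      _ = ENNReal.ofReal (N * Real.sqrt N) * ENNReal.ofReal (δ - -δ) := by
          rw [Real.volume_Icc]
      _ = ENNReal.ofReal ((N * Real.sqrt N) * (δ - -δ)) :=
          (ENNReal.ofReal_mul (by positivity)).symm
      _ = ENNReal.ofReal (6 * Real.sqrt N) := by
          congr 1
          rw [hδdef]
          field_simp [hN0.ne']
          ring
  have hcompl : ∫⁻ x in (Icc (-δ) δ)ᶜ, ENNReal.ofReal (Phi N x) ≤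
      ENNReal.ofReal (6 * Real.sqrt N) + ENNReal.ofReal (6 * Real.sqrt N) := by
    have hsub : (Icc (-δ) δ)ᶜ ⊆ Iio (-δ) ∪ Ioi δ := by
      intro x hx
      simp only [Set.mem_compl_iff, Set.mem_Icc, not_and_or, not_le] at hx
      rcases hx with h | h
      · exact Or.inl h
      · exact Or.inr h
    calc ∫⁻ x in (Icc (-δ) δ)ᶜ, ENNReal.ofReal (Phi N x)
        ≤ ∫⁻ x in Iio (-δ) ∪ Ioi δ, ENNReal.ofReal (Phi N x) := lintegral_mono_set hsub
      _ ≤ (∫⁻ x in Iio (-δ), ENNReal.ofReal (Phi N x)) +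
          ∫⁻ x in Ioi δ, ENNReal.ofReal (Phi N x) := lintegral_union_le _ _ _
      _ ≤ ENNReal.ofReal (6 * Real.sqrt N) + ENNReal.ofReal (6 * Real.sqrt N) :=
          add_le_add hIio hIoi
  calc ∫⁻ x : ℝ, ENNReal.ofReal (Phi N x)
      = (∫⁻ x in Icc (-δ) δ, ENNReal.ofReal (Phi N x)) +
        ∫⁻ x in (Icc (-δ) δ)ᶜ, ENNReal.ofReal (Phi N x) :=
        (lintegral_add_compl _ measurableSet_Icc).symm
    _ ≤ ENNReal.ofReal (6 * Real.sqrt N) +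
        (ENNReal.ofReal (6 * Real.sqrt N) + ENNReal.ofReal (6 * Real.sqrt N)) :=
        add_le_add hIcc hcompl
    _ = ENNReal.ofReal (18 * Real.sqrt N) := by
        rw [← ENNReal.ofReal_add (by positivity) (by positivity),
          ← ENNReal.ofReal_add (by positivity) (by positivity)]
        congr 1
        ring

end Stmt7Aux

open Stmt7Aux

/-- `∫_Ω |Θ_n(t)| dt ≤ c n` for an absolute constant `c > 0`. -/
theorem stmt7 :
    ∃ c : ℝ, 0 < c ∧ ∀ n : ℕ, 1 ≤ n → (∫ t in Hex, |Theta n t|) ≤ c * n := by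
  refine ⟨648, by norm_num, ?_⟩
  intro n hn
  set N : ℝ := (n : ℝ) + 1 with hNdef
  have hN1 : (1 : ℝ) ≤ N := by
    have : (0:ℝ) ≤ (n:ℝ) := Nat.cast_nonneg n
    simp only [hNdef]; linarith
  have hN0 : (0 : ℝ) < N := by linarith
  have hHexMeas : MeasurableSet Hex := by
    unfold Hex
    simp only [Set.setOf_and]
    exact ((measurableSet_le measurable_const measurable_fst).inter
      ((measurableSet_lt measurable_fst measurable_const).inter
      ((measurableSet_le measurable_const measurable_snd).inter
      ((measurableSet_lt measurable_snd measurable_const).inter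
      ((measurableSet_le measurable_const (measurable_fst.add measurable_snd)).inter
      (measurableSet_lt (measurable_fst.add measurable_snd) measurable_const))))))
  have hThetaMeas : Measurable (Theta n) := by
    unfold Theta t3
    apply Measurable.div <;> fun_prop
  have hφm : Measurable fun x : ℝ => ENNReal.ofReal (Phi N x) :=
    (measurable_Phi N).ennreal_ofReal
  set φ : ℝ → ℝ≥0∞ := fun x => ENNReal.ofReal (Phi N x) with hφdef
  -- the majorant on ℝ²
  set B : ℝ × ℝ → ℝ≥0∞ := fun t =>
    φ (t.1 - t.2) * φ (t.1 + 2 * t.2) +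
      (φ (t.1 + 2 * t.2) * φ (2 * t.1 + t.2) + φ (t.1 - t.2) * φ (2 * t.1 + t.2)) with hBdef
  have hpoint : ∀ t ∈ Hex, ENNReal.ofReal |Theta n t| ≤ B t := by
    intro t ht
    have h1 := theta_le n ht
    have h2 := pqr (F_nonneg hN0.le (t.1 - t.2)) (F_nonneg hN0.le (t.1 + 2 * t.2))
      (F_nonneg hN0.le (2 * t.1 + t.2))
    have h3 : |Theta n t| ≤
        Phi N (t.1 - t.2) * Phi N (t.1 + 2 * t.2) +
        (Phi N (t.1 + 2 * t.2) * Phi N (2 * t.1 + t.2) +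
         Phi N (t.1 - t.2) * Phi N (2 * t.1 + t.2)) := h1.trans h2
    refine le_trans (ENNReal.ofReal_le_ofReal h3) (le_of_eq ?_)
    have hP1 := Phi_nonneg hN0.le (t.1 - t.2)
    have hP2 := Phi_nonneg hN0.le (t.1 + 2 * t.2)
    have hP3 := Phi_nonneg hN0.le (2 * t.1 + t.2)
    rw [ENNReal.ofReal_add (by positivity) (by positivity),
      ENNReal.ofReal_add (by positivity) (by positivity),
      ENNReal.ofReal_mul hP1, ENNReal.ofReal_mul hP2, ENNReal.ofReal_mul hP1]
  have hBmeas1 : Measurable fun t : ℝ × ℝ => φ (t.1 - t.2) * φ (t.1 + 2 * t.2) :=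
    (hφm.comp (measurable_fst.sub measurable_snd)).mul
      (hφm.comp (measurable_fst.add (measurable_snd.const_mul 2)))
  have hBmeas2 : Measurable fun t : ℝ × ℝ => φ (t.1 + 2 * t.2) * φ (2 * t.1 + t.2) :=
    (hφm.comp (measurable_fst.add (measurable_snd.const_mul 2))).mul
      (hφm.comp ((measurable_fst.const_mul 2).add measurable_snd))
  -- the three decoupled integrals
  set A : ℝ≥0∞ := ∫⁻ x : ℝ, φ x with hAdef
  have hA : A ≤ ENNReal.ofReal (18 * Real.sqrt N) := lintegral_phi_le hN1
  have hterm : ∀ C : ℝ≥0∞, C = A * (ENNReal.ofReal (3⁻¹ : ℝ) * A) →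
      C ≤ ENNReal.ofReal (108 * N) := by
    intro C hC
    rw [hC]
    calc A * (ENNReal.ofReal (3⁻¹ : ℝ) * A)
        ≤ ENNReal.ofReal (18 * Real.sqrt N) *
          (ENNReal.ofReal (3⁻¹ : ℝ) * ENNReal.ofReal (18 * Real.sqrt N)) :=
          mul_le_mul' hA (mul_le_mul' le_rfl hA)
      _ = ENNReal.ofReal (108 * N) := by
          rw [← ENNReal.ofReal_mul (by positivity), ← ENNReal.ofReal_mul (by positivity)]
          congr 1
          have hss : Real.sqrt N * Real.sqrt N = N := Real.mul_self_sqrt hN0.le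
          nlinarith [hss]
  have hT1 : (∫⁻ t : ℝ × ℝ, φ (t.1 - t.2) * φ (t.1 + 2 * t.2)) ≤
      ENNReal.ofReal (108 * N) := by
    apply hterm
    have heq : (∫⁻ t : ℝ × ℝ, φ (t.1 - t.2) * φ (t.1 + 2 * t.2)) =
        ∫⁻ t : ℝ × ℝ, φ (t.1 + (-1) * t.2) * φ (1 * t.1 + 2 * t.2) := by
      apply lintegral_congr
      intro t
      rw [show t.1 + (-1) * t.2 = t.1 - t.2 by ring, show (1:ℝ) * t.1 + 2 * t.2
        = t.1 + 2 * t.2 by ring]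
    rw [heq, pair_bound hφm (-1) 1 2 (by norm_num), ← hAdef]
    norm_num [abs_of_nonneg]
  have hT2 : (∫⁻ t : ℝ × ℝ, φ (t.1 + 2 * t.2) * φ (2 * t.1 + t.2)) ≤
      ENNReal.ofReal (108 * N) := by
    apply hterm
    have heq : (∫⁻ t : ℝ × ℝ, φ (t.1 + 2 * t.2) * φ (2 * t.1 + t.2)) =
        ∫⁻ t : ℝ × ℝ, φ (t.1 + 2 * t.2) * φ (2 * t.1 + 1 * t.2) := by
      apply lintegral_congr
      intro t
      rw [show (2:ℝ) * t.1 + 1 * t.2 = 2 * t.1 + t.2 by ring]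
    rw [heq, pair_bound hφm 2 2 1 (by norm_num), ← hAdef]
    norm_num [abs_of_nonneg]
  have hT3 : (∫⁻ t : ℝ × ℝ, φ (t.1 - t.2) * φ (2 * t.1 + t.2)) ≤
      ENNReal.ofReal (108 * N) := by
    apply hterm
    have heq : (∫⁻ t : ℝ × ℝ, φ (t.1 - t.2) * φ (2 * t.1 + t.2)) =
        ∫⁻ t : ℝ × ℝ, φ (t.1 + (-1) * t.2) * φ (2 * t.1 + 1 * t.2) := by
      apply lintegral_congr
      intro t
      rw [show t.1 + (-1) * t.2 = t.1 - t.2 by ring,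
        show (2:ℝ) * t.1 + 1 * t.2 = 2 * t.1 + t.2 by ring]
    rw [heq, pair_bound hφm (-1) 2 1 (by norm_num), ← hAdef]
    norm_num [abs_of_nonneg]
  -- put everything together
  have h0 : 0 ≤ᵐ[volume.restrict Hex] fun t : ℝ × ℝ => |Theta n t| :=
    Filter.Eventually.of_forall fun t => abs_nonneg _
  rw [integral_eq_lintegral_of_nonneg_ae h0 hThetaMeas.abs.aestronglyMeasurable]
  apply ENNReal.toReal_le_of_le_ofReal (by positivity)
  calc ∫⁻ t in Hex, ENNReal.ofReal |Theta n t|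
      ≤ ∫⁻ t in Hex, B t := setLIntegral_mono' hHexMeas hpoint
    _ ≤ ∫⁻ t : ℝ × ℝ, B t := setLIntegral_le_lintegral _ _
    _ = (∫⁻ t : ℝ × ℝ, φ (t.1 - t.2) * φ (t.1 + 2 * t.2)) +
        ((∫⁻ t : ℝ × ℝ, φ (t.1 + 2 * t.2) * φ (2 * t.1 + t.2)) +
         (∫⁻ t : ℝ × ℝ, φ (t.1 - t.2) * φ (2 * t.1 + t.2))) := by
        rw [hBdef]
        rw [lintegral_add_left hBmeas1, lintegral_add_left hBmeas2]
    _ ≤ ENNReal.ofReal (108 * N) + (ENNReal.ofReal (108 * N) + ENNReal.ofReal (108 * N)) :=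
        add_le_add hT1 (add_le_add hT2 hT3)
    _ ≤ ENNReal.ofReal (648 * n) := by
        rw [← ENNReal.ofReal_add (by positivity) (by positivity),
          ← ENNReal.ofReal_add (by positivity) (by positivity)]
        apply ENNReal.ofReal_le_ofReal
        have hn' : (1 : ℝ) ≤ (n : ℝ) := by exact_mod_cast hn
        rw [hNdef]
        nlinarith [hn']
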